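/- For ν ≥ 1, the number A_n^ν of (d,k,r)-constrained binary sequences of length n and weight ν beginning with a one is given by A_n^ν = Σ_{j=0}^{ν-1} (-1)^j C(ν-1, j) [ C(n-1-(ν-1)d - j(k-d+1), ν-1) - C(n-1-(r+1)-(ν-1)d - j(k-d+1), ν-1) ], where C(a,b) denotes the binomial coefficient and C(a,b) = 0 whenever a < b. -/

import Mathlib

/-- Weight of a binary sequence: number of ones. -/
def wt (l : List Bool) : ℕ := l.count true

/-- Length of the leading run of zeros. -/
def leadZeros (l : List Bool) : ℕ := (l.takeWhile (fun b => !b)).length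

/-- Length of the trailing run of zeros. -/
def trailZeros (l : List Bool) : ℕ := (l.reverse.takeWhile (fun b => !b)).length

/-- Every internal run of zeros (between two consecutive ones) has length in `[d, k]`. -/
def internalOK (d k : ℕ) (l : List Bool) : Prop :=
  ∀ i j : ℕ, i < j → j < l.length → l.getD i false = true → l.getD j false = true →
    (∀ m, i < m → m < j → l.getD m false = false) →
    d ≤ j - i - 1 ∧ j - i - 1 ≤ k

/-- NRZI charge accumulator: current bipolar level `z`, remaining bits. -/
def chargeAux : ℤ → List Bool → ℤ
  | _, [] => 0
  | z, b :: t => (if b then -z else z) + chargeAux (if b then -z else z) t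

/-- NRZI charge (digital sum) of a binary sequence. -/
def charge (l : List Bool) : ℤ := chargeAux 1 l

/-- Number of (d,k,r)-sequences of length n and weight ν beginning with a one
(the empty sequence is allowed, giving `A 0 0 = 1`). -/
noncomputable def Adkr (d k r n ν : ℕ) : ℕ :=
  Nat.card {l : List Bool // l.length = n ∧ (l ≠ [] → l.head? = some true) ∧
    internalOK d k l ∧ trailZeros l ≤ r ∧ wt l = ν}

/-- Number of (d,k,l,r)-sequences of length n and weight ν. -/
noncomputable def Adklr (d k L r n ν : ℕ) : ℕ :=
  Nat.card {x : List Bool // x.length = n ∧ leadZeros x ≤ L ∧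
    internalOK d k x ∧ trailZeros x ≤ r ∧ wt x = ν}

/-- Number of (d,k,r)-sequences of length n beginning with a one, with NRZI charge σ. -/
noncomputable def Cdkr (d k r n : ℕ) (σ : ℤ) : ℕ :=
  Nat.card {l : List Bool // l.length = n ∧ (l ≠ [] → l.head? = some true) ∧
    internalOK d k l ∧ trailZeros l ≤ r ∧ charge l = σ}

/-- Number of (d,k,l,r)-sequences of length n with NRZI charge σ. -/
noncomputable def Cdklr (d k L r n : ℕ) (σ : ℤ) : ℕ :=
  Nat.card {x : List Bool // x.length = n ∧ leadZeros x ≤ L ∧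
    internalOK d k x ∧ trailZeros x ≤ r ∧ charge x = σ}

/-- Binomial coefficient with integer upper argument; zero when the upper argument is negative. -/
def ibin (a : ℤ) (b : ℕ) : ℤ := if 0 ≤ a then (a.toNat.choose b : ℤ) else 0

section Aux
open PowerSeries Finset



def core : List ℕ → List Bool
  | [] => [true]
  | g :: gs => true :: (List.replicate g false ++ core gs)

def encR (gs : List ℕ) (t : ℕ) : List Bool := core gs ++ List.replicate t false

lemma core_ne_nil (gs : List ℕ) : core gs ≠ [] := by cases gs <;> simp [core]

lemma core_length (gs : List ℕ) : (core gs).length = gs.length + 1 + gs.sum := by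
  induction gs with
  | nil => simp [core]
  | cons g gs ih => simp [core, ih]; omega

lemma core_wt (gs : List ℕ) : wt (core gs) = gs.length + 1 := by
  induction gs with
  | nil => simp [core, wt]
  | cons g gs ih => simp [core, wt, List.count_append, List.count_replicate] at *; omega

lemma core_head (gs : List ℕ) : (core gs).head? = some true := by cases gs <;> rfl

lemma encR_length (gs : List ℕ) (t : ℕ) : (encR gs t).length = gs.length + 1 + gs.sum + t := by
  simp [encR, core_length]

lemma encR_wt (gs : List ℕ) (t : ℕ) : wt (encR gs t) = gs.length + 1 := by
  simp [encR, wt, List.count_append, List.count_replicate]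
  exact core_wt gs

lemma encR_head (gs : List ℕ) (t : ℕ) : (encR gs t).head? = some true := by
  cases gs <;> rfl

lemma takeWhile_rep (t : ℕ) (rest : List Bool) :
    List.takeWhile (fun b => !b) (List.replicate t false ++ true :: rest) = List.replicate t false := by
  induction t with
  | zero => simp [List.takeWhile]
  | succ t ih => simp [List.replicate_succ, List.takeWhile, ih]

lemma encR_trail (gs : List ℕ) (t : ℕ) : trailZeros (encR gs t) = t := by
  have : ∃ rest, (core gs).reverse = true :: rest := by
    induction gs with
    | nil => exact ⟨[], rfl⟩
    | cons g gs ih =>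
      obtain ⟨rest, hrest⟩ := ih
      exact ⟨rest ++ List.replicate g false ++ [true], by simp [core, hrest]⟩
  obtain ⟨rest, hrest⟩ := this
  simp [trailZeros, encR, List.reverse_append, hrest, takeWhile_rep]

lemma getD_replicate_false (g n : ℕ) : (List.replicate g false).getD n false = false := by
  rcases lt_or_ge n g with h|h
  · simp [List.getD_eq_getElem?_getD, List.getElem?_replicate, h]
  · rw [List.getD_eq_getElem?_getD, List.getElem?_eq_none (by simpa using h)]; rfl

lemma L_getD_mid (g : ℕ) (l' : List Bool) (m : ℕ) (h1 : 1 ≤ m) (h2 : m ≤ g) :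
    (true :: (List.replicate g false ++ l')).getD m false = false := by
  obtain ⟨m, rfl⟩ : ∃ m', m = m' + 1 := ⟨m-1, by omega⟩
  rw [List.getD_cons_succ, List.getD_append _ _ _ _ (by simp; omega), getD_replicate_false]

lemma L_getD_hi (g : ℕ) (l' : List Bool) (m : ℕ) (h : g + 1 ≤ m) :
    (true :: (List.replicate g false ++ l')).getD m false = l'.getD (m - g - 1) false := by
  obtain ⟨m, rfl⟩ : ∃ m', m = m' + 1 := ⟨m-1, by omega⟩
  rw [List.getD_cons_succ, List.getD_append_right _ _ _ _ (by simp; omega)]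
  simp only [List.length_replicate]
  congr 1
  omega

lemma getD_zero_of_head (l : List Bool) (h : l.head? = some true) : l.getD 0 false = true := by
  cases l with
  | nil => simp at h
  | cons a t => simp at h; simp [h]

lemma internalOK_one (d k t : ℕ) : internalOK d k (true :: List.replicate t false) := by
  intro i j hij hj hi htj _
  exfalso
  obtain ⟨j, rfl⟩ : ∃ j', j = j' + 1 := ⟨j-1, by omega⟩
  rw [List.getD_cons_succ, getD_replicate_false] at htj
  exact Bool.false_ne_true htj

lemma internalOK_cons (d k g : ℕ) (l' : List Bool) (hl' : l'.head? = some true) :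
    internalOK d k (true :: (List.replicate g false ++ l')) ↔
      ((d ≤ g ∧ g ≤ k) ∧ internalOK d k l') := by
  have hne : l' ≠ [] := by intro h; rw [h] at hl'; simp at hl'
  have hlen : 1 ≤ l'.length := List.length_pos_iff.mpr hne
  have hLlen : (true :: (List.replicate g false ++ l')).length = 1 + g + l'.length := by
    simp; omega
  have h0 : (true :: (List.replicate g false ++ l')).getD 0 false = true := rfl
  have hg1 : (true :: (List.replicate g false ++ l')).getD (g+1) false = true := by
    rw [L_getD_hi g l' (g+1) (le_refl _)]
    simpa using getD_zero_of_head l' hl'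
  constructor
  · intro hOK
    constructor
    · have := hOK 0 (g+1) (by omega) (by omega) h0 hg1 (fun m hm1 hm2 => L_getD_mid g l' m hm1 (by omega))
      omega
    · intro i j hij hj hi htj hmid
      have := hOK (i+g+1) (j+g+1) (by omega) (by omega)
        (by rw [L_getD_hi g l' _ (by omega)]; convert hi using 2; omega)
        (by rw [L_getD_hi g l' _ (by omega)]; convert htj using 2; omega)
        (fun m hm1 hm2 => by
          rw [L_getD_hi g l' _ (by omega)]
          have := hmid (m - g - 1) (by omega) (by omega)
          exact this)
      omega
  · rintro ⟨⟨hd, hk⟩, hOK'⟩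
    intro i j hij hj hi htj hmid
    rcases Nat.eq_zero_or_pos i with rfl | hipos
    · -- i = 0
      have hjg : j = g + 1 := by
        rcases lt_trichotomy j (g+1) with h|h|h
        · exfalso
          rw [L_getD_mid g l' j (by omega) (by omega)] at htj
          exact Bool.false_ne_true htj
        · exact h
        · exfalso
          have := hmid (g+1) (by omega) h
          rw [hg1] at this
          simp at this
      subst hjg
      constructor <;> omega
    · have hig : g + 1 ≤ i := by
        by_contra h
        rw [L_getD_mid g l' i hipos (by omega)] at hi
        exact Bool.false_ne_true hi
      have hjg : g + 1 ≤ j := by omega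
      have := hOK' (i - g - 1) (j - g - 1) (by omega) (by omega)
        (by rw [← L_getD_hi g l' i hig]; exact hi)
        (by rw [← L_getD_hi g l' j hjg]; exact htj)
        (fun m hm1 hm2 => by
          have := hmid (m + g + 1) (by omega) (by omega)
          rw [L_getD_hi g l' _ (by omega)] at this
          convert this using 2
          omega)
      omega


lemma internalOK_encR (d k t : ℕ) (gs : List ℕ) :
    internalOK d k (encR gs t) ↔ ∀ g ∈ gs, d ≤ g ∧ g ≤ k := by
  induction gs with
  | nil =>
    simp only [List.not_mem_nil, false_implies, implies_true, iff_true]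
    exact internalOK_one d k t
  | cons g gs ih =>
    have he : encR (g::gs) t = true :: (List.replicate g false ++ encR gs t) := by
      simp [encR, core]
    rw [he, internalOK_cons d k g _ (encR_head gs t), ih, List.forall_mem_cons]

lemma decomp : ∀ n (l : List Bool), l.length ≤ n → l.head? = some true →
    ∃ gs t, l = encR gs t ∧ gs.length + 1 = wt l := by
  intro n
  induction n with
  | zero =>
    intro l hl hh
    rw [List.length_eq_zero_iff.mp (Nat.le_zero.mp hl)] at hh
    simp at hh
  | succ n ih =>
    intro l hl hh
    obtain ⟨rest, rfl⟩ : ∃ rest, l = true :: rest := by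
      cases l with
      | nil => simp at hh
      | cons a t => simp at hh; exact ⟨t, by rw [hh]⟩
    set g := leadZeros rest with hg
    have hsplit : rest = List.replicate g false ++ rest.dropWhile (fun b => !b) := by
      conv_lhs => rw [← List.takeWhile_append_dropWhile (p := fun b => !b) (l := rest)]
      congr 1
      have : ∀ b ∈ rest.takeWhile (fun b => !b), b = false := by
        intro b hb
        have := List.mem_takeWhile_imp hb
        simpa using this
      exact List.eq_replicate_of_mem this
    rcases hd : rest.dropWhile (fun b => !b) with _ | ⟨b, rr⟩
    · rw [hd] at hsplit
      simp only [List.append_nil] at hsplit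
      refine ⟨[], g, ?_, ?_⟩
      · rw [hsplit]; rfl
      · rw [hsplit]; simp [wt, List.count_replicate]
    · have hb : b = true := by
        have h1 : rest.find? (fun x => !(!x)) = some b := by
          rw [List.find?_not_eq_head?_dropWhile, hd]; rfl
        have := List.find?_some h1
        simpa using this
      subst hb
      have hlen : (rest.dropWhile (fun b => !b)).length ≤ n := by
        have h1 := congrArg List.length (List.takeWhile_append_dropWhile (p := fun b => !b) (l := rest))
        simp only [List.length_append] at h1
        simp only [List.length_cons] at hl
        omega
      rw [hd] at hlen hsplit
      obtain ⟨gs, t, he, hwt⟩ := ih (true :: rr) hlen rfl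
      refine ⟨g :: gs, t, ?_, ?_⟩
      · rw [hsplit, he]; simp [encR, core]
      · rw [hsplit]
        simp only [wt, List.count_cons, List.count_append, List.count_replicate] at hwt ⊢
        simp at hwt ⊢
        omega

lemma core_inj : ∀ gs gs' : List ℕ, core gs = core gs' → gs = gs' := by
  intro gs
  induction gs with
  | nil =>
    intro gs' h
    cases gs' with
    | nil => rfl
    | cons g' t' =>
      exfalso
      have := congrArg List.length h
      rw [core_length, core_length] at this
      simp at this
      omega
  | cons g t ih =>
    intro gs' h
    cases gs' with
    | nil =>
      exfalso
      have := congrArg List.length h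
      rw [core_length, core_length] at this
      simp at this
      omega
    | cons g' t' =>
      simp only [core, List.cons.injEq, true_and] at h
      obtain ⟨r1, hr1⟩ : ∃ r, core t = true :: r := by cases t <;> exact ⟨_, rfl⟩
      obtain ⟨r2, hr2⟩ : ∃ r, core t' = true :: r := by cases t' <;> exact ⟨_, rfl⟩
      have hgg : g = g' := by
        have h1 := congrArg (List.takeWhile (fun b => !b)) h
        rw [hr1, hr2, takeWhile_rep, takeWhile_rep] at h1
        simpa using congrArg List.length h1
      subst hgg
      have h2 := List.append_cancel_left h
      rw [ih _ h2]

lemma encR_inj {gs gs' : List ℕ} {t t' : ℕ} (h : encR gs t = encR gs' t') : gs = gs' ∧ t = t' := by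
  have ht : t = t' := by rw [← encR_trail gs t, h, encR_trail]
  subst ht
  have h2 : core gs = core gs' := by
    apply List.append_cancel_right (bs := List.replicate t false)
    exact h
  exact ⟨core_inj _ _ h2, rfl⟩



lemma ibin_of_lt {a : ℤ} {b : ℕ} (h : a < b) : ibin a b = 0 := by
  unfold ibin
  split_ifs with h0
  · norm_cast
    apply Nat.choose_eq_zero_of_lt
    omega
  · rfl

noncomputable def IOS (m : ℕ) : PowerSeries ℤ := (PowerSeries.invOneSubPow ℤ m).val

lemma coeff_X_pow_mul' (a s : ℕ) (p : PowerSeries ℤ) :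
    PowerSeries.coeff s (X^a * p) = if a ≤ s then PowerSeries.coeff (s-a) p else 0 := by
  split_ifs with h
  · have := PowerSeries.coeff_X_pow_mul p a (s-a)
    rwa [Nat.sub_add_cancel h] at this
  · rw [PowerSeries.coeff_mul]
    apply Finset.sum_eq_zero
    rintro ⟨u,v⟩ huv
    rw [Finset.HasAntidiagonal.mem_antidiagonal] at huv
    rw [PowerSeries.coeff_X_pow, if_neg (by omega)]
    ring

lemma coeff_X_pow_mul_inv (m a s : ℕ) :
    PowerSeries.coeff s (X^a * IOS (m+1)) = ibin ((s:ℤ) + m - a) m := by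
  rw [coeff_X_pow_mul']
  split_ifs with h
  · rw [IOS, PowerSeries.invOneSubPow_val_succ_eq_mk_add_choose, PowerSeries.coeff_mk]
    unfold ibin
    rw [if_pos (by omega)]
    have : ((s:ℤ) + m - a).toNat = m + (s - a) := by omega
    rw [this]
  · rw [ibin_of_lt (by omega)]

lemma one_sub_mul_geom (M : ℕ) :
    (1 - X : PowerSeries ℤ) * (∑ i ∈ range M, X^i) = 1 - X^M := by
  have := geom_sum_mul (X : PowerSeries ℤ) M
  linear_combination -this

lemma one_sub_X_pow_ne : ∀ m : ℕ, ((1 - X : PowerSeries ℤ)^m) ≠ 0 := by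
  intro m
  apply pow_ne_zero
  intro h0
  have := congrArg (PowerSeries.constantCoeff (R := ℤ)) h0
  simp at this

lemma inv_prop (m : ℕ) : (1 - X : PowerSeries ℤ)^(m+1) * IOS (m+1) = 1 := by
  have h1 := (PowerSeries.invOneSubPow ℤ (m+1)).inv_val
  rwa [PowerSeries.invOneSubPow_inv_eq_one_sub_pow] at h1

lemma sum_Icc_Xpow (d k : ℕ) (h : d ≤ k) :
    (∑ g ∈ Finset.Icc d k, (X:PowerSeries ℤ)^g) = X^d * ∑ i ∈ range (k-d+1), X^i := by
  rw [← Finset.Ico_add_one_right_eq_Icc, Finset.sum_Ico_eq_sum_range]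
  have : k + 1 - d = k - d + 1 := by omega
  rw [this, Finset.mul_sum]
  exact Finset.sum_congr rfl (fun i _ => by rw [pow_add])

lemma factorizationPS (d k r m : ℕ) (h : d ≤ k) :
    (∑ g ∈ Finset.Icc d k, (X:PowerSeries ℤ)^g)^m * (∑ t ∈ range (r+1), X^t)
      = ((X:PowerSeries ℤ)^d)^m * ((1 - X^(k-d+1))^m * ((1 - X^(r+1)) * IOS (m+1))) := by
  apply mul_left_cancel₀ (one_sub_X_pow_ne (m+1))
  rw [sum_Icc_Xpow d k h]
  calc (1-X:PowerSeries ℤ)^(m+1) * ((X^d * ∑ i ∈ range (k-d+1), X^i)^m * (∑ t ∈ range (r+1), X^t))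
      = ((X:PowerSeries ℤ)^d)^m * (((1-X) * ∑ i ∈ range (k-d+1), X^i)^m *
          ((1-X) * ∑ t ∈ range (r+1), X^t)) := by rw [mul_pow, mul_pow]; ring
    _ = ((X:PowerSeries ℤ)^d)^m * ((1 - X^(k-d+1))^m * (1 - X^(r+1))) := by
          rw [one_sub_mul_geom, one_sub_mul_geom]
    _ = (1-X:PowerSeries ℤ)^(m+1) * (((X:PowerSeries ℤ)^d)^m *
          ((1 - X^(k-d+1))^m * ((1 - X^(r+1)) * IOS (m+1)))) := by
          rw [show (1-X:PowerSeries ℤ)^(m+1) * (((X:PowerSeries ℤ)^d)^m *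
              ((1 - X^(k-d+1))^m * ((1 - X^(r+1)) * IOS (m+1))))
            = ((1-X:PowerSeries ℤ)^(m+1) * IOS (m+1)) *
              (((X:PowerSeries ℤ)^d)^m * ((1 - X^(k-d+1))^m * (1 - X^(r+1)))) from by ring,
            inv_prop, one_mul]

lemma expand_pow (q m : ℕ) : (1 - (X:PowerSeries ℤ)^q)^m
    = ∑ j ∈ range (m+1), PowerSeries.C ((-1:ℤ)^j * (Nat.choose m j : ℤ)) * X^(q*j) := by
  rw [sub_eq_add_neg, add_comm, add_pow]
  apply Finset.sum_congr rfl
  intro j hj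
  rw [one_pow, mul_one, neg_pow, ← pow_mul]
  simp only [map_mul, map_pow, map_neg, map_one, map_natCast]
  ring

lemma coeff_main (d k r m s : ℕ) (h : d ≤ k) :
    PowerSeries.coeff s ((∑ g ∈ Finset.Icc d k, (X:PowerSeries ℤ)^g)^m * (∑ t ∈ range (r+1), X^t))
      = ∑ j ∈ range (m+1), (-1:ℤ)^j * (Nat.choose m j) *
          (ibin ((s:ℤ) + m - m*d - (k-d+1)*j) m - ibin ((s:ℤ) + m - m*d - (k-d+1)*j - (r+1)) m) := by
  rw [factorizationPS d k r m h, expand_pow]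
  have hrw : ((X:PowerSeries ℤ)^d)^m * ((∑ j ∈ range (m+1),
        PowerSeries.C ((-1:ℤ)^j * (Nat.choose m j : ℤ)) * X^((k-d+1)*j)) * ((1 - X^(r+1)) * IOS (m+1)))
      = ∑ j ∈ range (m+1), PowerSeries.C ((-1:ℤ)^j * (Nat.choose m j : ℤ)) *
          (X^(d*m + (k-d+1)*j) * IOS (m+1) - X^(d*m + (k-d+1)*j + (r+1)) * IOS (m+1)) := by
    rw [Finset.sum_mul, Finset.mul_sum]
    apply Finset.sum_congr rfl
    intro j hj
    simp only [← pow_mul, pow_add]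
    ring
  rw [hrw, map_sum]
  apply Finset.sum_congr rfl
  intro j hj
  rw [PowerSeries.coeff_C_mul, map_sub, coeff_X_pow_mul_inv, coeff_X_pow_mul_inv]
  have e1 : (s:ℤ) + m - ((d*m + (k-d+1)*j : ℕ) : ℤ) = (s:ℤ) + m - m*d - ((k:ℤ)-d+1)*j := by
    push_cast [Nat.cast_sub h]; ring
  have e2 : (s:ℤ) + m - ((d*m + (k-d+1)*j + (r+1) : ℕ) : ℤ)
      = (s:ℤ) + m - m*d - ((k:ℤ)-d+1)*j - (r+1) := by
    push_cast [Nat.cast_sub h]; ring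
  rw [e1, e2]

lemma card_eq_coeff (d k r m s : ℕ) :
    ((Finset.filter (fun p : (Fin m → ℕ) × ℕ => (∑ i, p.1 i) + p.2 = s)
       ((Fintype.piFinset fun _ => Finset.Icc d k) ×ˢ Finset.Iic r)).card : ℤ)
    = PowerSeries.coeff s ((∑ g ∈ Finset.Icc d k, (X:PowerSeries ℤ)^g)^m * (∑ t ∈ range (r+1), X^t)) := by
  have h1 : (∑ g ∈ Finset.Icc d k, (X:PowerSeries ℤ)^g)^m
      = ∑ f ∈ Fintype.piFinset (fun _ : Fin m => Finset.Icc d k), X^(∑ i, f i) := by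
    have : (∑ g ∈ Finset.Icc d k, (X:PowerSeries ℤ)^g)^m
        = ∏ _i : Fin m, (∑ g ∈ Finset.Icc d k, (X:PowerSeries ℤ)^g) := by
      rw [Finset.prod_const]; simp
    rw [this, Finset.prod_univ_sum]
    exact Finset.sum_congr rfl (fun f _ => Finset.prod_pow_eq_pow_sum _ _ _)
  have h2 : (∑ t ∈ range (r+1), (X:PowerSeries ℤ)^t) = ∑ t ∈ Finset.Iic r, X^t := by
    apply Finset.sum_congr _ (fun _ _ => rfl)
    ext x; simp [Nat.lt_succ_iff]
  rw [h1, h2, Finset.sum_mul_sum]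
  rw [map_sum]
  have h3 : ∀ f ∈ Fintype.piFinset (fun _ : Fin m => Finset.Icc d k),
      (PowerSeries.coeff s) (∑ t ∈ Finset.Iic r, (X:PowerSeries ℤ)^(∑ i, f i) * X^t)
      = ∑ t ∈ Finset.Iic r, if (∑ i, f i) + t = s then (1:ℤ) else 0 := by
    intro f _
    rw [map_sum]
    apply Finset.sum_congr rfl
    intro t _
    rw [← pow_add, PowerSeries.coeff_X_pow]
    simp [eq_comm]
  rw [Finset.sum_congr rfl h3, Finset.card_filter]
  push_cast
  rw [Finset.sum_product]


lemma ofFn_cast {α} {m n : ℕ} (h : n = m) (f : Fin n → α) :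
    List.ofFn (fun i : Fin m => f (Fin.cast h.symm i)) = List.ofFn f := by subst h; rfl

lemma Adkr_eq_card (d k r n ν : ℕ) (hν : 1 ≤ ν) :
    Adkr d k r n ν = (Finset.filter
      (fun p : (Fin (ν-1) → ℕ) × ℕ => ν + (∑ i, p.1 i) + p.2 = n)
      ((Fintype.piFinset fun _ => Finset.Icc d k) ×ˢ Finset.Iic r)).card := by
  set m := ν - 1 with hm
  have hν1 : ν = m + 1 := by omega
  set S := Finset.filter
      (fun p : (Fin m → ℕ) × ℕ => ν + (∑ i, p.1 i) + p.2 = n)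
      ((Fintype.piFinset fun _ => Finset.Icc d k) ×ˢ Finset.Iic r) with hS
  rw [Adkr, ← Nat.card_eq_finsetCard]
  refine (Nat.card_eq_of_bijective (fun p : {p // p ∈ S} =>
    (⟨encR (List.ofFn p.1.1) p.1.2, ?_⟩ :
      {l : List Bool // l.length = n ∧ (l ≠ [] → l.head? = some true) ∧
        internalOK d k l ∧ trailZeros l ≤ r ∧ wt l = ν})) ⟨?_, ?_⟩).symm
  · -- membership proofs
    obtain ⟨⟨f, t⟩, hp⟩ := p
    rw [hS, Finset.mem_filter, Finset.mem_product, Fintype.mem_piFinset] at hp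
    obtain ⟨⟨hf, ht⟩, hsum⟩ := hp
    simp only [Finset.mem_Icc] at hf
    simp only [Finset.mem_Iic] at ht
    refine ⟨?_, fun _ => encR_head _ _, ?_, ?_, ?_⟩
    · rw [encR_length]
      simp only [List.length_ofFn, List.sum_ofFn]
      simp only at hsum
      omega
    · rw [internalOK_encR]
      intro g hg
      obtain ⟨i, rfl⟩ := (List.mem_ofFn).mp hg
      exact hf i
    · rw [encR_trail]; exact ht
    · rw [encR_wt]; simp only [List.length_ofFn]; omega
  · -- injective
    rintro ⟨⟨f, t⟩, hp⟩ ⟨⟨f', t'⟩, hp'⟩ hfe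
    simp only [Subtype.mk.injEq] at hfe
    obtain ⟨h1, h2⟩ := encR_inj hfe
    have := List.ofFn_injective h1
    subst h2
    simp only [Subtype.mk.injEq, Prod.mk.injEq]
    exact ⟨this, trivial⟩
  · -- surjective
    rintro ⟨l, hlen, hhead, hOK, htrail, hwt⟩
    have hne : l ≠ [] := by
      intro h
      rw [h] at hwt
      simp [wt] at hwt
      omega
    obtain ⟨gs, t, he, hwtgs⟩ := decomp l.length l le_rfl (hhead hne)
    have hgs : gs.length = m := by rw [hwt] at hwtgs; omega
    refine ⟨⟨⟨fun i : Fin m => gs.get (Fin.cast hgs.symm i), t⟩, ?_⟩, ?_⟩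
    · rw [hS, Finset.mem_filter, Finset.mem_product, Fintype.mem_piFinset]
      have hofn : List.ofFn (fun i : Fin m => gs.get (Fin.cast hgs.symm i)) = gs := by
        rw [ofFn_cast hgs gs.get, List.ofFn_get]
      have hOK' : ∀ g ∈ gs, d ≤ g ∧ g ≤ k := by
        rw [he, internalOK_encR] at hOK
        exact hOK
      refine ⟨⟨?_, ?_⟩, ?_⟩
      · intro i
        rw [Finset.mem_Icc]
        exact hOK' _ (List.mem_iff_get.mpr ⟨_, rfl⟩)
      · rw [Finset.mem_Iic]
        rw [he, encR_trail] at htrail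
        exact htrail
      · have hsum : (∑ i, (fun i : Fin m => gs.get (Fin.cast hgs.symm i)) i) = gs.sum := by
          rw [← List.sum_ofFn, hofn]
        simp only [hsum]
        rw [he, encR_length] at hlen
        omega
    · apply Subtype.ext
      simp only
      rw [ofFn_cast hgs gs.get, List.ofFn_get, ← he]

end Aux

open PowerSeries Finset in
theorem stmt4 (d k r n ν : ℕ) (hk : d ≤ k) (hν : 1 ≤ ν) :
    (Adkr d k r n ν : ℤ) =
      ∑ j ∈ Finset.range ν, (-1 : ℤ) ^ j * ((ν - 1).choose j) *
        (ibin ((n : ℤ) - 1 - (ν - 1 : ℕ) * d - j * ((k : ℤ) - d + 1)) (ν - 1) -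
         ibin ((n : ℤ) - 1 - (r + 1) - (ν - 1 : ℕ) * d - j * ((k : ℤ) - d + 1)) (ν - 1)) := by
  rcases lt_or_ge n ν with hlt | hge
  · have hA : Adkr d k r n ν = 0 := by
      rw [Adkr]
      have : IsEmpty {l : List Bool // l.length = n ∧ (l ≠ [] → l.head? = some true) ∧
          internalOK d k l ∧ trailZeros l ≤ r ∧ wt l = ν} := by
        constructor
        rintro ⟨l, hlen, -, -, -, hwt⟩
        have h1 : wt l ≤ l.length := List.count_le_length
        rw [hwt, hlen] at h1
        omega
      exact Nat.card_of_isEmpty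
    rw [hA]
    symm
    push_cast
    apply Finset.sum_eq_zero
    intro j hj
    have hdk : (d:ℤ) ≤ k := by exact_mod_cast hk
    have hb : (0:ℤ) ≤ (j:ℤ) * ((k:ℤ) - d + 1) := by
      apply mul_nonneg (Int.natCast_nonneg j)
      linarith
    have ha : (0:ℤ) ≤ ((ν-1:ℕ):ℤ) * (d:ℤ) := by positivity
    have hc : ((ν-1:ℕ):ℤ) = (ν:ℤ) - 1 := by
      push_cast [Nat.cast_sub hν]; ring
    have hn' : (n:ℤ) < ν := by exact_mod_cast hlt
    rw [hc] at ha
    rw [ibin_of_lt (by rw [hc]; linarith), ibin_of_lt (by rw [hc]; linarith)]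
    ring
  · set m := ν - 1 with hm
    have hν1 : ν = m + 1 := by omega
    rw [Adkr_eq_card d k r n ν hν]
    have hfeq : Finset.filter (fun p : (Fin m → ℕ) × ℕ => ν + (∑ i, p.1 i) + p.2 = n)
          ((Fintype.piFinset fun _ => Finset.Icc d k) ×ˢ Finset.Iic r)
        = Finset.filter (fun p : (Fin m → ℕ) × ℕ => (∑ i, p.1 i) + p.2 = n - ν)
          ((Fintype.piFinset fun _ => Finset.Icc d k) ×ˢ Finset.Iic r) := by
      apply Finset.filter_congr
      intro x _
      constructor <;> intro h <;> omega
    rw [hfeq, card_eq_coeff d k r m (n-ν), coeff_main d k r m (n-ν) hk]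
    conv_rhs => rw [hν1]
    apply Finset.sum_congr rfl
    intro j hj
    have hc1 : ((n-ν:ℕ):ℤ) = (n:ℤ) - ν := by push_cast [Nat.cast_sub hge]; ring
    have hc2 : ((m:ℕ):ℤ) = (ν:ℤ) - 1 := by rw [hm]; push_cast [Nat.cast_sub hν]; ring
    have e1 : ((n-ν:ℕ):ℤ) + (m:ℤ) - (m:ℤ)*(d:ℤ) - ((k:ℤ)-d+1)*(j:ℤ)
        = (n:ℤ) - 1 - (m:ℤ)*d - (j:ℤ)*((k:ℤ)-d+1) := by
      rw [hc1, hc2]; ring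
    rw [e1, show ((n:ℤ) - 1 - (m:ℤ)*(d:ℤ) - (j:ℤ)*((k:ℤ)-d+1) - ((r:ℤ)+1) : ℤ)
        = (n:ℤ) - 1 - ((r:ℤ)+1) - (m:ℤ)*d - (j:ℤ)*((k:ℤ)-d+1) from by ring]
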